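/- Let p be a prime, q a primitive p²-th root of unity, c(z,y) = q^{-z(y-y')} where y' is the remainder of y mod p, and let b, d be integers coprime to p. If the function g(i,j) = (c(i,j)/c(i-d,j))·q^{bj} is p-periodic in each variable, then b ≡ d (mod p). -/
import Mathlib


/-- For `p` prime, `q` a primitive `p²`-th root of unity, `c(z,y) = q^{-z(y-y')}`
(`y'` the remainder of `y` mod `p`), and `b, d` coprime to `p`: if
`g(i,j) = (c(i,j)/c(i-d,j))·q^{bj}` is `p`-periodic in each variable, then
`b ≡ d (mod p)`. -/
theorem periodicity_forces_congruence
    (p : ℕ) (hp : p.Prime) (q : ℂ) (hq : IsPrimitiveRoot q (p ^ 2))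
    (b d : ℤ) (hb : IsCoprime b (p : ℤ)) (hd : IsCoprime d (p : ℤ))
    (c : ℤ → ℤ → ℂ)
    (hc : ∀ z y : ℤ, c z y = q ^ (-(z * (y - y % (p : ℤ)))))
    (g : ℤ → ℤ → ℂ)
    (hg : ∀ i j : ℤ, g i j = c i j / c (i - d) j * q ^ (b * j))
    (hper : ∀ i j : ℤ, g (i + p) j = g i j ∧ g i (j + p) = g i j) :
    b ≡ d [ZMOD p] := by
  have hq0 : q ≠ 0 := hq.ne_zero (by have := hp.pos; positivity)
  have h := (hper 0 0).2
  rw [hg, hg, hc, hc, hc, hc] at h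
  simp [Int.emod_emod_of_dvd] at h
  have h2 : q ^ ((b - d) * (p:ℤ)) = 1 := by
    rw [sub_mul, zpow_sub₀ hq0, div_eq_inv_mul]; exact h
  have h3 : ((p:ℤ))^2 ∣ (b - d) * p := by
    have := (hq.zpow_eq_one_iff_dvd _).mp h2
    exact_mod_cast this
  have hp0 : (p:ℤ) ≠ 0 := by exact_mod_cast hp.ne_zero
  rw [Int.modEq_iff_dvd]
  obtain ⟨k, hk⟩ := h3
  refine ⟨-k, ?_⟩
  have : (b - d) * p = (p * k) * p := by rw [hk]; ring
  have := mul_right_cancel₀ hp0 this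
  linarith
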